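/- If L̃ attains a global minimum over pairs (ν, μ) of functions S → ℝ, then L also attains a global minimum over such pairs, and the two minimum values coincide: min_{ν,μ} L(ν,μ) = min_{ν,μ} L̃(ν,μ). -/
import Mathlib


open scoped BigOperators

noncomputable def eFn {S A : Type*} [Fintype S] (γ : ℝ) (T : S → A → S → ℝ)
    (ν μ : S → ℝ) (s : S) (a : A) : ℝ :=
  μ s + γ * ∑ s', T s a s' * ν s' - ν s

noncomputable def Lobj {S A : Type*} [Fintype S] [Fintype A] (γ : ℝ) (p0 : S → ℝ)
    (T : S → A → S → ℝ) (dD : S → A → ℝ) (α : ℝ) (φ : ℝ → ℝ) (ν μ : S → ℝ) : ℝ :=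
  (1 - γ) * ∑ s, p0 s * ν s
    + ∑ s, ∑ a, dD s a * (α * φ (eFn γ T ν μ s a / α))
    + ∑ s, Real.exp (-μ s - 1)

noncomputable def Ltilde {S A : Type*} [Fintype S] [Fintype A] (γ : ℝ) (p0 : S → ℝ)
    (T : S → A → S → ℝ) (dD : S → A → ℝ) (α : ℝ) (φ : ℝ → ℝ) (ν μ : S → ℝ) : ℝ :=
  (1 - γ) * ∑ s, p0 s * ν s
    + ∑ s, ∑ a, dD s a * (α * φ (eFn γ T ν μ s a / α))
    + Real.log (∑ s, Real.exp (-μ s))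

lemma tilde_le_L {S A : Type*} [Fintype S] [Fintype A] [Nonempty S] (γ : ℝ) (p0 : S → ℝ)
    (T : S → A → S → ℝ) (dD : S → A → ℝ) (α : ℝ) (φ : ℝ → ℝ) (ν μ : S → ℝ) :
    Ltilde γ p0 T dD α φ ν μ ≤ Lobj γ p0 T dD α φ ν μ := by
  unfold Ltilde Lobj
  have hW : (0:ℝ) < ∑ s, Real.exp (-μ s) :=
    Finset.sum_pos (fun s _ => Real.exp_pos _) Finset.univ_nonempty
  set W := ∑ s, Real.exp (-μ s) with hWdef
  have h1 : ∑ s, Real.exp (-μ s - 1) = W * Real.exp (-1) := by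
    rw [hWdef, Finset.sum_mul]
    congr 1; funext s
    rw [← Real.exp_add]; ring_nf
  rw [h1]
  have h2 : Real.log W ≤ W * Real.exp (-1) := by
    have hWe : (0:ℝ) < W * Real.exp (-1) := mul_pos hW (Real.exp_pos _)
    have := Real.log_le_sub_one_of_pos hWe
    have hlog : Real.log (W * Real.exp (-1)) = Real.log W - 1 := by
      rw [Real.log_mul (ne_of_gt hW) (ne_of_gt (Real.exp_pos _)), Real.log_exp]
      ring
    linarith [hlog ▸ this]
  linarith

theorem stmt3 {S A : Type*} [Fintype S] [Fintype A] [Nonempty S] [Nonempty A]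
    (γ : ℝ) (hγ : γ ∈ Set.Ioo (0:ℝ) 1)
    (p0 : S → ℝ) (hp0 : ∀ s, 0 ≤ p0 s) (hp0sum : ∑ s, p0 s = 1)
    (T : S → A → S → ℝ) (hT : ∀ s a s', 0 ≤ T s a s')
    (hTsum : ∀ s a, ∑ s', T s a s' = 1)
    (dD : S → A → ℝ) (hdD : ∀ s a, 0 ≤ dD s a) (hdDsum : ∑ s, ∑ a, dD s a = 1)
    (α : ℝ) (hα : 0 < α) (φ : ℝ → ℝ)
    (νt μt : S → ℝ)
    (hmin : ∀ ν μ : S → ℝ, Ltilde γ p0 T dD α φ νt μt ≤ Ltilde γ p0 T dD α φ ν μ) :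
    ∃ νs μs : S → ℝ,
      (∀ ν μ : S → ℝ, Lobj γ p0 T dD α φ νs μs ≤ Lobj γ p0 T dD α φ ν μ) ∧
        Lobj γ p0 T dD α φ νs μs = Ltilde γ p0 T dD α φ νt μt := by
  have hγ1 : (1:ℝ) - γ ≠ 0 := by have := hγ.2; intro h; linarith
  have hZ : (0:ℝ) < ∑ s, Real.exp (-μt s) :=
    Finset.sum_pos (fun s _ => Real.exp_pos _) Finset.univ_nonempty
  set Z := ∑ s, Real.exp (-μt s) with hZdef
  set c := Real.log Z - 1 with hc
  set νs : S → ℝ := fun s => νt s + c / (1 - γ) with hνs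
  set μs : S → ℝ := fun s => μt s + c with hμs
  have he : ∀ s a, eFn γ T νs μs s a = eFn γ T νt μt s a := by
    intro s a
    simp only [eFn, hνs, hμs, mul_add, Finset.sum_add_distrib, ← Finset.sum_mul,
      hTsum s a]
    field_simp
    ring
  have heq : Lobj γ p0 T dD α φ νs μs = Ltilde γ p0 T dD α φ νt μt := by
    unfold Lobj Ltilde
    have h1 : (1 - γ) * ∑ s, p0 s * νs s
        = (1 - γ) * (∑ s, p0 s * νt s) + c := by
      simp only [hνs, mul_add, Finset.sum_add_distrib, ← Finset.sum_mul, hp0sum]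
      field_simp
    have h2 : (∑ s, ∑ a, dD s a * (α * φ (eFn γ T νs μs s a / α)))
        = ∑ s, ∑ a, dD s a * (α * φ (eFn γ T νt μt s a / α)) := by
      refine Finset.sum_congr rfl fun s _ => Finset.sum_congr rfl fun a _ => ?_
      rw [he s a]
    have h3 : (∑ s, Real.exp (-μs s - 1)) = 1 := by
      have : ∀ s, Real.exp (-μs s - 1) = Real.exp (-μt s) * Real.exp (-Real.log Z) := by
        intro s
        rw [← Real.exp_add]
        simp only [hμs, hc]
        ring_nf
      simp only [this]
      rw [← Finset.sum_mul, ← hZdef, Real.exp_neg, Real.exp_log hZ]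
      field_simp
    rw [h1, h2, h3, hc]
    ring
  refine ⟨νs, μs, fun ν μ => ?_, heq⟩
  calc Lobj γ p0 T dD α φ νs μs = Ltilde γ p0 T dD α φ νt μt := heq
    _ ≤ Ltilde γ p0 T dD α φ ν μ := hmin ν μ
    _ ≤ Lobj γ p0 T dD α φ ν μ := tilde_le_L γ p0 T dD α φ ν μ
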